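/- Let d ∈ ℕ and let N be an endomorphism of an abelian group A with N^{d+1} = 0. Suppose for all j ≥ 0 the two subgroups Σ_i ker(N^{i+1}) ∩ im(N^{i-d+2j}) and Σ_i ker(N^{i+1}) ∩ im(N^{i-d+2j-1}) coincide; call this common subgroup F^j. If moreover ker(N) = F^d, then for all 0 ≤ j ≤ d+1 we have ker(N^{d+1-j}) = F^j and im(N^j) = F^j. -/

import Mathlib

/-- Let `N` be an endomorphism of an abelian group `A` with `N^(d+1) = 0`.
Suppose for every `j` the subgroups `⨆ i, ker(N^(i+1)) ⊓ im(N^(i-d+2j))` and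
`⨆ i, ker(N^(i+1)) ⊓ im(N^(i-d+2j-1))` coincide, and call this common subgroup `F j`
(negative powers of `N` are read as the identity, encoded by truncated `ℕ`-subtraction).
If moreover `ker N = F d`, then `ker(N^(d+1-j)) = F j` and `im(N^j) = F j`
for all `0 ≤ j ≤ d+1`. -/
theorem stmt1 (A : Type*) [AddCommGroup A] (d : ℕ) (N : AddMonoid.End A)
    (hN : N ^ (d + 1) = 0) (F : ℕ → AddSubgroup A)
    (hF : ∀ j, F j =
      ⨆ i : ℕ, (AddMonoidHom.ker (N ^ (i + 1)) ⊓ AddMonoidHom.range (N ^ (i + 2 * j - d))))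
    (hF' : ∀ j, F j =
      ⨆ i : ℕ, (AddMonoidHom.ker (N ^ (i + 1)) ⊓ AddMonoidHom.range (N ^ (i + 2 * j - (d + 1)))))
    (hker : AddMonoidHom.ker (N : A →+ A) = F d) :
    ∀ j ≤ d + 1, AddMonoidHom.ker (N ^ (d + 1 - j)) = F j ∧
      AddMonoidHom.range (N ^ j) = F j := by
  have happ : ∀ (a b : ℕ) (x : A), (N ^ (a + b)) x = (N ^ a) ((N ^ b) x) := by
    intro a b x
    rw [pow_add]
    rfl
  have hzero : ∀ m, d + 1 ≤ m → (N ^ m : AddMonoid.End A) = 0 := by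
    intro m hm
    obtain ⟨k, rfl⟩ := Nat.exists_eq_add_of_le hm
    rw [pow_add, hN, zero_mul]
  -- Step A : F j ≤ ker (N ^ (d+1-j))
  have stepA : ∀ j, j ≤ d + 1 → F j ≤ AddMonoidHom.ker (N ^ (d + 1 - j)) := by
    intro j hj
    rw [hF j]
    apply iSup_le
    intro i x hx
    rw [AddSubgroup.mem_inf] at hx
    obtain ⟨hk, y, hy⟩ := hx
    change (N ^ (i + 1)) x = 0 at hk
    change (N ^ (i + 2 * j - d)) y = x at hy
    change (N ^ (d + 1 - j)) x = 0
    by_cases h : i + 1 ≤ d + 1 - j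
    · have h1 : d + 1 - j = (d + 1 - j - (i + 1)) + (i + 1) := by omega
      rw [h1, happ, hk, map_zero]
    · have hij : d + 1 ≤ i + j := by omega
      have he : i + 2 * j - d + (d + 1 - j) = i + j + 1 := by omega
      have h2 : ((N ^ (d + 1 - j)) x) = (N ^ (i + j + 1)) y := by
        rw [← hy, ← happ, Nat.add_comm, he]
      rw [h2, hzero (i + j + 1) (by omega)]
      rfl
  -- Step B : range (N ^ j) ≤ F j
  have stepB : ∀ j, j ≤ d + 1 → AddMonoidHom.range (N ^ j) ≤ F j := by
    intro j hj x hx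
    obtain ⟨y, rfl⟩ := hx
    by_cases hjd : j ≤ d
    · rw [hF j]
      refine AddSubgroup.mem_iSup_of_mem (d - j) ?_
      rw [AddSubgroup.mem_inf]
      constructor
      · show (N ^ (d - j + 1)) ((N ^ j) y) = 0
        rw [← happ]
        have : d - j + 1 + j = d + 1 := by omega
        rw [this, hN]
        rfl
      · have : d - j + 2 * j - d = j := by omega
        rw [this]
        exact ⟨y, rfl⟩
    · have hj' : j = d + 1 := by omega
      subst hj'
      rw [hN]
      exact zero_mem (F (d + 1))
  -- Step C : ker N ≤ range (N ^ d)
  have stepC : AddMonoidHom.ker (N : A →+ A) ≤ AddMonoidHom.range (N ^ d) := by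
    rw [hker, hF d]
    apply iSup_le
    intro i x hx
    rw [AddSubgroup.mem_inf] at hx
    obtain ⟨-, y, hy⟩ := hx
    have : i + 2 * d - d = d + i := by omega
    rw [this] at hy
    exact ⟨(N ^ i) y, (happ d i y).symm.trans hy⟩
  -- Step D : ker (N ^ m) ≤ range (N ^ (d+1-m))
  have stepD : ∀ m, ∀ x : A, (N ^ m) x = 0 → x ∈ AddMonoidHom.range (N ^ (d + 1 - m)) := by
    intro m
    induction m with
    | zero =>
      intro x hx
      rw [pow_zero] at hx
      have hx0 : x = 0 := hx
      subst hx0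
      exact zero_mem _
    | succ m ih =>
      intro x hx
      by_cases hm : m ≤ d
      · have h1 : (N : A →+ A) ((N ^ m) x) = 0 := by
          have := happ 1 m x
          rw [Nat.add_comm] at this
          rw [← hx, this, pow_one]
        obtain ⟨z, hz⟩ := stepC h1
        have h2 : (N ^ m) (x - (N ^ (d - m)) z) = 0 := by
          rw [map_sub, ← happ]
          have : m + (d - m) = d := by omega
          rw [this]
          exact sub_eq_zero.mpr hz.symm
        obtain ⟨w, hw⟩ := ih _ h2
        have hdm : d + 1 - m = (d - m) + 1 := by omega
        rw [hdm] at hw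
        have hxmem : x - (N ^ (d - m)) z ∈ AddMonoidHom.range (N ^ (d - m)) := ⟨N w, by
          have := happ (d - m) 1 w
          rw [pow_one] at this
          exact this.symm.trans hw⟩
        have hvmem : (N ^ (d - m)) z ∈ AddMonoidHom.range (N ^ (d - m)) := ⟨z, rfl⟩
        have : d + 1 - (m + 1) = d - m := by omega
        rw [this]
        simpa using add_mem hxmem hvmem
      · have : d + 1 - (m + 1) = 0 := by omega
        rw [this]
        exact ⟨x, by rw [pow_zero]; rfl⟩
  -- Assemble
  intro j hj
  have hkerle : AddMonoidHom.ker (N ^ (d + 1 - j)) ≤ AddMonoidHom.range (N ^ j) := by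
    intro x hx
    change (N ^ (d + 1 - j)) x = 0 at hx
    have := stepD (d + 1 - j) x hx
    have hjj : d + 1 - (d + 1 - j) = j := by omega
    rwa [hjj] at this
  constructor
  · exact le_antisymm (fun x hx => stepB j hj (hkerle hx)) (stepA j hj)
  · exact le_antisymm (stepB j hj) (fun x hx => hkerle (stepA j hj hx))
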